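/- An ultimately periodic word w belongs to L if and only if its natural color is even. -/

import Mathlib

open scoped Classical

/-- Concatenation of a finite word with an infinite word. -/
def wcat {A : Type} (u : List A) (w : ℕ → A) : ℕ → A :=
  fun n => if h : n < u.length then u.get ⟨n, h⟩ else w (n - u.length)

/-- The infinite periodic word `v^ω`. -/
def wpow {A : Type} [Inhabited A] (v : List A) : ℕ → A :=
  fun n => v.getD (n % v.length) default

/-- The ultimately periodic word `u · v^ω`. -/
def upw {A : Type} [Inhabited A] (u v : List A) : ℕ → A := wcat u (wpow v)

/-- The finite word `v^i`. -/
def wrep {A : Type} (v : List A) (i : ℕ) : List A := (List.replicate i v).flatten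

/-- The right congruence `x ∼_L y`. -/
def simL {A : Type} (L : Set (ℕ → A)) (x y : List A) : Prop :=
  ∀ w : ℕ → A, wcat x w ∈ L ↔ wcat y w ∈ L

/-- `w` is `u`-invariant: `u ∼_L u·w`. -/
def UInv {A : Type} (L : Set (ℕ → A)) (u w : List A) : Prop := simL L u (u ++ w)

/-- `v` is relevant to `u`. -/
def URel {A : Type} (L : Set (ℕ → A)) (u v : List A) : Prop :=
  ∃ z : List A, UInv L u (v ++ z)

/-- `v` has natural color at most `c` wrt `u`. -/
def ColorAtMost {A : Type} [Inhabited A] (L : Set (ℕ → A)) (u : List A) :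
    ℕ → List A → Prop
  | c, v => ∀ z : List A, UInv L u (v ++ z) →
      ((upw u (v ++ z) ∈ L ↔ Even c) ∨
        ∃ i : ℕ, 0 < i ∧ ∃ c' : Fin c, ColorAtMost L u c' (wrep (v ++ z) i))
  termination_by c => c
  decreasing_by exact c'.isLt

/-- The natural color of the finite word `v` wrt `u`: `⊥` (i.e. `-∞`) if `v` is
irrelevant to `u`, and otherwise the minimal `c ≥ 0` as in the paper. -/
noncomputable def ncol {A : Type} [Inhabited A] (L : Set (ℕ → A)) (u v : List A) :
    WithBot ℕ :=
  if URel L u v then ((sInf {c : ℕ | ColorAtMost L u c v} : ℕ) : WithBot ℕ) else ⊥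

/-- `v` is stable wrt `u`. -/
def Stable {A : Type} [Inhabited A] (L : Set (ℕ → A)) (u v : List A) : Prop :=
  ∀ i : ℕ, 0 < i → ncol L u v = ncol L u (wrep v i)

/-- `v` is `u`-reliable. -/
def UReliable {A : Type} [Inhabited A] (L : Set (ℕ → A)) (u v : List A) : Prop :=
  UInv L u v ∧ Stable L u v

/-- The natural color of an ultimately periodic infinite word. -/
noncomputable def icol {A : Type} [Inhabited A] (L : Set (ℕ → A)) (w : ℕ → A) : ℕ :=
  sInf {c : ℕ | ∃ u v : List A, v ≠ [] ∧ w = upw u v ∧ UInv L u v ∧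
    ncol L u v = (c : WithBot ℕ)}

/-- The set of states visited infinitely often by a run. -/
def infSet {Q : Type} (r : ℕ → Q) : Set Q := {q | ∀ n : ℕ, ∃ m : ℕ, n ≤ m ∧ r m = q}

/-- The run of a complete deterministic automaton on an infinite word. -/
def runOf {A Q : Type} (δ : Q → A → Q) (q0 : Q) (w : ℕ → A) : ℕ → Q
  | 0 => q0
  | n + 1 => δ (runOf δ q0 w n) (w n)

/-- `L` is ω-regular: recognized by some deterministic Muller automaton. -/
def OmegaRegular {A : Type} (L : Set (ℕ → A)) : Prop :=
  ∃ (Q : Type) (_ : Fintype Q) (q0 : Q) (δ : Q → A → Q) (α : Set (Set Q)),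
    ∀ w : ℕ → A, w ∈ L ↔ infSet (runOf δ q0 w) ∈ α


section Words
variable {A : Type}

theorem wcat_append (x y : List A) (w : ℕ → A) :
    wcat (x ++ y) w = wcat x (wcat y w) := by
  funext n
  simp only [wcat, List.length_append]
  rcases lt_or_ge n x.length with h | h
  · rw [dif_pos (by omega : n < x.length + y.length), dif_pos h]
    simp [List.getElem_append, h]
  · rcases lt_or_ge n (x.length + y.length) with h2 | h2
    · rw [dif_pos h2, dif_neg (by omega), dif_pos (by omega : n - x.length < y.length)]
      simp only [List.get_eq_getElem]
      rw [List.getElem_append_right (by omega)]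
    · rw [dif_neg (by omega), dif_neg (by omega), dif_neg (by omega)]
      congr 1
      omega

theorem wrep_zero (v : List A) : wrep v 0 = [] := rfl

theorem wrep_succ (v : List A) (i : ℕ) : wrep v (i+1) = v ++ wrep v i := by
  simp [wrep, List.replicate_succ]

theorem wrep_one (v : List A) : wrep v 1 = v := by
  simp [wrep]

theorem wrep_add (v : List A) (i j : ℕ) : wrep v (i+j) = wrep v i ++ wrep v j := by
  induction i with
  | zero => simp [wrep_zero]
  | succ k ih =>
    have : k + 1 + j = (k + j) + 1 := by omega
    rw [this, wrep_succ, wrep_succ, ih, List.append_assoc]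

theorem wrep_ne_nil (v : List A) (hv : v ≠ []) (i : ℕ) (hi : 1 ≤ i) : wrep v i ≠ [] := by
  obtain ⟨k, rfl⟩ : ∃ k, i = k + 1 := ⟨i - 1, by omega⟩
  rw [wrep_succ]
  simp [hv]

theorem wrep_length (v : List A) (i : ℕ) : (wrep v i).length = i * v.length := by
  induction i with
  | zero => simp [wrep_zero]
  | succ k ih => rw [wrep_succ]; simp [ih]; ring

theorem wrep_wrep (v : List A) (i j : ℕ) : wrep (wrep v i) j = wrep v (i * j) := by
  induction j with
  | zero => simp [wrep_zero]
  | succ k ih =>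
    rw [wrep_succ, ih]
    have : i * (k + 1) = i + i * k := by ring
    rw [this, wrep_add]

theorem wrep_getD (v : List A) [Inhabited A] (i m : ℕ) (hm : m < i * v.length) :
    (wrep v i).getD m default = v.getD (m % v.length) default := by
  induction i generalizing m with
  | zero => simp at hm
  | succ k ih =>
    rw [wrep_succ]
    rcases lt_or_ge m v.length with h | h
    · rw [Nat.mod_eq_of_lt h, List.getD_append _ _ _ _ h]
    · rw [Nat.succ_mul] at hm
      have hlt : m - v.length < k * v.length := by omega
      rw [List.getD_append_right _ _ _ _ h, ih (m - v.length) hlt, Nat.mod_eq_sub_mod h]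

theorem wpow_wrep (v : List A) [Inhabited A] (hv : v ≠ []) (i : ℕ) (hi : 1 ≤ i) :
    wpow (wrep v i) = wpow v := by
  funext n
  have hv' : 0 < v.length := List.length_pos_iff.2 hv
  have hl : 0 < (wrep v i).length := List.length_pos_iff.2 (wrep_ne_nil v hv i hi)
  simp only [wpow]
  rw [wrep_getD v i _ (by rw [← wrep_length]; exact Nat.mod_lt _ hl)]
  congr 1
  rw [wrep_length]
  exact Nat.mod_mod_of_dvd n (dvd_mul_left _ _)

theorem wcat_wpow (v : List A) [Inhabited A] (hv : v ≠ []) :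
    wcat v (wpow v) = wpow v := by
  funext n
  have hv' : 0 < v.length := List.length_pos_iff.2 hv
  simp only [wcat, wpow]
  rcases lt_or_ge n v.length with h | h
  · rw [dif_pos h, Nat.mod_eq_of_lt h]
    simp [List.getD, List.getElem?_eq_getElem h]
  · rw [dif_neg (by omega)]
    congr 1
    rw [Nat.mod_eq_sub_mod h]

theorem wcat_wrep_wpow (v : List A) [Inhabited A] (hv : v ≠ []) (i : ℕ) :
    wcat (wrep v i) (wpow v) = wpow v := by
  induction i with
  | zero => funext n; simp [wrep_zero, wcat]
  | succ k ih => rw [wrep_succ, wcat_append, ih, wcat_wpow v hv]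

theorem upw_wrep (u v : List A) [Inhabited A] (hv : v ≠ []) (i : ℕ) (hi : 1 ≤ i) :
    upw u (wrep v i) = upw u v := by
  unfold upw
  rw [wpow_wrep v hv i hi]

end Words

section Siml
variable {A : Type} {L : Set (ℕ → A)}

theorem simL_refl (x : List A) : simL L x x := fun _ => Iff.rfl

theorem simL_symm {x y : List A} (h : simL L x y) : simL L y x := fun w => (h w).symm

theorem simL_trans {x y z : List A} (h1 : simL L x y) (h2 : simL L y z) : simL L x z :=
  fun w => (h1 w).trans (h2 w)

theorem simL_append {x y : List A} (h : simL L x y) (c : List A) :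
    simL L (x ++ c) (y ++ c) := by
  intro w
  rw [wcat_append, wcat_append]
  exact h (wcat c w)

theorem UInv_nil (u : List A) : UInv L u [] := by
  unfold UInv
  rw [List.append_nil]
  exact simL_refl u

theorem UInv_append {u x y : List A} (hx : UInv L u x) (hy : UInv L u y) :
    UInv L u (x ++ y) := by
  intro w
  calc (wcat u w ∈ L) ↔ wcat (u ++ y) w ∈ L := hy w
    _ ↔ wcat u (wcat y w) ∈ L := by rw [wcat_append]
    _ ↔ wcat (u ++ x) (wcat y w) ∈ L := hx (wcat y w)
    _ ↔ wcat ((u ++ x) ++ y) w ∈ L := by rw [wcat_append (u ++ x) y]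
    _ ↔ wcat (u ++ (x ++ y)) w ∈ L := by rw [List.append_assoc]

theorem UInv_wrep {u v : List A} (hv : UInv L u v) (i : ℕ) : UInv L u (wrep v i) := by
  induction i with
  | zero => exact UInv_nil u
  | succ k ih => rw [wrep_succ]; exact UInv_append hv ih

/-- membership only depends on the `simL`-class of the prefix -/
theorem UInv_strip {u γ : List A} (hγ : UInv L u γ) (w : ℕ → A) :
    wcat (u ++ γ) w ∈ L ↔ wcat u w ∈ L := (hγ w).symm

end Siml

section CAM
variable {A : Type} [Inhabited A] {L : Set (ℕ → A)}

theorem ColorAtMost_iff (u : List A) (c : ℕ) (v : List A) :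
    ColorAtMost L u c v ↔ ∀ z : List A, UInv L u (v ++ z) →
      ((upw u (v ++ z) ∈ L ↔ Even c) ∨
        ∃ i : ℕ, 0 < i ∧ ∃ c' : Fin c, ColorAtMost L u c' (wrep (v ++ z) i)) := by
  rw [ColorAtMost]

theorem ColorAtMost_mono_word {u v z : List A} {c : ℕ} (h : ColorAtMost L u c v) :
    ColorAtMost L u c (v ++ z) := by
  rw [ColorAtMost_iff] at h ⊢
  intro z2 h2
  have := h (z ++ z2) (by rwa [← List.append_assoc])
  rwa [← List.append_assoc] at this

end CAM

section Assembly
variable {A : Type} [Inhabited A] {L : Set (ℕ → A)}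

/-- the minimal color of `v` wrt `u` -/
noncomputable def mcolor (L : Set (ℕ → A)) (u v : List A) : ℕ :=
  sInf {c | ColorAtMost L u c v}

theorem ncol_eq_mcolor {u v : List A} (hv : UInv L u v) :
    ncol L u v = (mcolor L u v : WithBot ℕ) := by
  have : URel L u v := ⟨[], by rwa [List.append_nil]⟩
  simp [ncol, this, mcolor]

theorem mcolor_mem {u v : List A}
    (hne : ∃ c, ColorAtMost L u c v) : ColorAtMost L u (mcolor L u v) v :=
  Nat.sInf_mem hne

theorem mcolor_le {u v : List A} {c : ℕ} (h : ColorAtMost L u c v) :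
    mcolor L u v ≤ c := Nat.sInf_le h

/-- Parity lemma for "stable" words: if v is invariant, colors exist for all
wreps, and the min color of every wrep equals that of v, then membership matches
parity. -/
theorem parity_of_stable {u v : List A} (hv : UInv L u v)
    (hne : ∃ c, ColorAtMost L u c v)
    (hstab : ∀ i, 1 ≤ i → mcolor L u (wrep v i) = mcolor L u v) :
    (upw u v ∈ L ↔ Even (mcolor L u v)) := by
  have hmem := mcolor_mem hne
  rw [ColorAtMost_iff] at hmem
  have h0 := hmem [] (by rwa [List.append_nil])
  rcases h0 with h1 | ⟨i, hi, c', hc'⟩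
  · rwa [List.append_nil] at h1
  · exfalso
    rw [List.append_nil] at hc'
    have h2 : mcolor L u (wrep v i) ≤ (c' : ℕ) := mcolor_le hc'
    rw [hstab i hi] at h2
    exact absurd (lt_of_le_of_lt h2 c'.isLt) (lt_irrefl _)

/-- From any invariant v, extract i₀ ≥ 1 such that wrep v i₀ is min-stable. -/
theorem exists_stable_rep {u v : List A} (hv : UInv L u v) (hvne : v ≠ [])
    (bound : ∀ x : List A, UInv L u x → x ≠ [] → ∃ c, ColorAtMost L u c x) :
    ∃ i₀, 1 ≤ i₀ ∧ mcolor L u (wrep v i₀) ≤ mcolor L u v ∧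
      (∀ j, 1 ≤ j → mcolor L u (wrep (wrep v i₀) j) = mcolor L u (wrep v i₀)) ∧
      (∃ c, ColorAtMost L u c (wrep v i₀)) := by
  classical
  set T : Set ℕ := {m | ∃ i, 1 ≤ i ∧ m = mcolor L u (wrep v i)} with hT
  have hTne : T.Nonempty := ⟨mcolor L u (wrep v 1), 1, le_refl 1, rfl⟩
  obtain ⟨i₀, hi₀, hmin⟩ : ∃ i, 1 ≤ i ∧ sInf T = mcolor L u (wrep v i) :=
    Nat.sInf_mem hTne
  have hrep_inv : ∀ k, UInv L u (wrep v k) := fun k => UInv_wrep hv k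
  have hrep_ne : ∀ k, 1 ≤ k → wrep v k ≠ [] := fun k hk => wrep_ne_nil v hvne k hk
  have hboundrep : ∀ k, 1 ≤ k → ∃ c, ColorAtMost L u c (wrep v k) :=
    fun k hk => bound _ (hrep_inv k) (hrep_ne k hk)
  refine ⟨i₀, hi₀, ?_, ?_, hboundrep i₀ hi₀⟩
  · rw [← hmin]
    have : mcolor L u v ∈ T := ⟨1, le_refl 1, by rw [wrep_one]⟩
    exact Nat.sInf_le this
  · intro j hj
    rw [wrep_wrep]
    have hij : 1 ≤ i₀ * j := Nat.one_le_iff_ne_zero.2 (by positivity)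
    apply le_antisymm
    · -- propagation: ColorAtMost (mcolor (wrep v i₀)) (wrep v (i₀ * j))
      have h1 := mcolor_mem (hboundrep i₀ hi₀)
      have hle : i₀ ≤ i₀ * j := Nat.le_mul_of_pos_right i₀ (by omega : 0 < j)
      have : i₀ * j = i₀ + (i₀ * j - i₀) := by omega
      rw [this, wrep_add]
      exact mcolor_le (ColorAtMost_mono_word h1)
    · rw [← hmin]
      exact Nat.sInf_le ⟨i₀ * j, hij, rfl⟩

end Assembly

section MainOfBound
variable {A : Type} [Inhabited A] {L : Set (ℕ → A)}

theorem main_of_bound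
    (bound : ∀ u x : List A, UInv L u x → x ≠ [] → ∃ c, ColorAtMost L u c x)
    (w : ℕ → A) (hdec : ∃ u v : List A, v ≠ [] ∧ w = upw u v ∧ UInv L u v) :
    w ∈ L ↔ Even (icol L w) := by
  classical
  set S : Set ℕ := {c : ℕ | ∃ u v : List A, v ≠ [] ∧ w = upw u v ∧ UInv L u v ∧
    ncol L u v = (c : WithBot ℕ)} with hS
  have hSne : S.Nonempty := by
    obtain ⟨u, v, hvne, hw, hinv⟩ := hdec
    exact ⟨mcolor L u v, u, v, hvne, hw, hinv, ncol_eq_mcolor hinv⟩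
  have hicol : icol L w = sInf S := rfl
  obtain ⟨u₂, v₂, hne₂, hw₂, hinv₂, hncol₂⟩ : sInf S ∈ S := Nat.sInf_mem hSne
  have hmc₂ : mcolor L u₂ v₂ = sInf S := by
    have := (ncol_eq_mcolor hinv₂).symm.trans hncol₂
    exact_mod_cast this
  obtain ⟨i₀, hi₀, hle, hstab, hcne⟩ :=
    exists_stable_rep hinv₂ hne₂ (fun x hx hxne => bound u₂ x hx hxne)
  set v' : List A := wrep v₂ i₀ with hv'
  have hv'ne : v' ≠ [] := wrep_ne_nil v₂ hne₂ i₀ hi₀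
  have hv'inv : UInv L u₂ v' := UInv_wrep hinv₂ i₀
  have hupw' : upw u₂ v' = w := by
    rw [hv', upw_wrep u₂ v₂ hne₂ i₀ hi₀, hw₂]
  have hpar : upw u₂ v' ∈ L ↔ Even (mcolor L u₂ v') :=
    parity_of_stable hv'inv hcne hstab
  have hmem' : mcolor L u₂ v' ∈ S :=
    ⟨u₂, v', hv'ne, hupw'.symm, hv'inv, ncol_eq_mcolor hv'inv⟩
  have heq : mcolor L u₂ v' = sInf S :=
    le_antisymm (by rw [← hmc₂]; exact hle) (Nat.sInf_le hmem')
  rw [hicol, ← heq, ← hupw']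
  exact hpar

end MainOfBound

section Auto1
variable {A Q : Type} (δ : Q → A → Q)

/-- extended transition function -/
def dst : List A → Q → Q
  | [], q => q
  | a :: w, q => dst w (δ q a)

/-- states visited while reading w from q (including start, excluding end) -/
def vis : List A → Q → Set Q
  | [], _ => ∅
  | a :: w, q => insert q (vis w (δ q a))

theorem dst_append (w₁ w₂ : List A) (q : Q) :
    dst δ (w₁ ++ w₂) q = dst δ w₂ (dst δ w₁ q) := by
  induction w₁ generalizing q with
  | nil => rfl
  | cons a w ih => simp [dst, ih]

theorem vis_append (w₁ w₂ : List A) (q : Q) :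
    vis δ (w₁ ++ w₂) q = vis δ w₁ q ∪ vis δ w₂ (dst δ w₁ q) := by
  induction w₁ generalizing q with
  | nil => simp [vis, dst]
  | cons a w ih => simp [vis, dst, ih, Set.insert_union]

theorem mem_vis_iff (w : List A) (q s : Q) :
    s ∈ vis δ w q ↔ ∃ n, n < w.length ∧ dst δ (w.take n) q = s := by
  induction w generalizing q with
  | nil => simp [vis]
  | cons a w ih =>
    simp only [vis, Set.mem_insert_iff, ih, List.length_cons]
    constructor
    · rintro (rfl | ⟨n, hn, rfl⟩)
      · exact ⟨0, by omega, rfl⟩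
      · exact ⟨n + 1, by omega, by simp [dst]⟩
    · rintro ⟨n, hn, rfl⟩
      match n with
      | 0 => exact Or.inl rfl
      | n + 1 =>
        right
        exact ⟨n, by omega, by simp [dst]⟩

theorem vis_prefix_subset (w₁ w₂ : List A) (q : Q) :
    vis δ w₁ q ⊆ vis δ (w₁ ++ w₂) q := by
  rw [vis_append]; exact Set.subset_union_left

theorem dst_take_mem_vis (w : List A) (q : Q) {n : ℕ} (hn : n < w.length) :
    dst δ (w.take n) q ∈ vis δ w q := by
  rw [mem_vis_iff]; exact ⟨n, hn, rfl⟩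

/-- the list of the first n letters of an infinite word -/
def wtake (w : ℕ → A) (n : ℕ) : List A := (List.range n).map w

theorem wtake_succ (w : ℕ → A) (n : ℕ) : wtake w (n + 1) = wtake w n ++ [w n] := by
  simp [wtake, List.range_succ]

theorem runOf_eq_dst (q : Q) (w : ℕ → A) (n : ℕ) :
    runOf δ q w n = dst δ (wtake w n) q := by
  induction n with
  | zero => rfl
  | succ k ih =>
    rw [wtake_succ, dst_append]
    simp [runOf, ih, dst]

theorem wtake_wcat (pre : List A) (w : ℕ → A) (n : ℕ) :
    wtake (wcat pre w) (pre.length + n) = pre ++ wtake w n := by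
  induction n with
  | zero =>
    simp only [Nat.add_zero, wtake, List.map, List.append_nil]
    apply List.ext_getElem
    · simp
    · intro i h1 h2
      simp only [List.getElem_map, List.getElem_range]
      simp only [List.length_map, List.length_range] at h1
      simp [wcat, h1]
  | succ k ih =>
    have : pre.length + (k + 1) = (pre.length + k) + 1 := by omega
    rw [this, wtake_succ, ih, wtake_succ, List.append_assoc]
    congr 2
    simp [wcat]

theorem infSet_wcat (q0 : Q) (pre : List A) (w : ℕ → A) :
    infSet (runOf δ q0 (wcat pre w)) = infSet (runOf δ (dst δ pre q0) w) := by
  have hrun : ∀ n, runOf δ q0 (wcat pre w) (pre.length + n) =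
      runOf δ (dst δ pre q0) w n := by
    intro n
    rw [runOf_eq_dst, runOf_eq_dst, wtake_wcat, dst_append]
  ext s
  simp only [infSet, Set.mem_setOf_eq]
  constructor
  · intro h n
    obtain ⟨m, hm, hms⟩ := h (pre.length + n)
    refine ⟨m - pre.length, by omega, ?_⟩
    rw [← hrun, Nat.add_sub_cancel' (by omega : pre.length ≤ m)]
    exact hms
  · intro h n
    obtain ⟨m, hm, hms⟩ := h n
    exact ⟨pre.length + m, by omega, by rw [hrun]; exact hms⟩

theorem wtake_wpow {v : List A} [Inhabited A] (hv : v ≠ []) (j l : ℕ)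
    (hl : l ≤ v.length) :
    wtake (wpow v) (j * v.length + l) = wrep v j ++ v.take l := by
  have hv' : 0 < v.length := List.length_pos_iff.2 hv
  apply List.ext_getElem
  · simp [wtake, wrep_length]; omega
  · intro i h1 h2
    simp only [wtake, List.length_map, List.length_range] at h1
    simp only [wtake, List.getElem_map, List.getElem_range]
    show wpow v i = _
    rcases lt_or_ge i (j * v.length) with h | h
    · rw [List.getElem_append_left (by rw [wrep_length]; omega)]
      have h0 : (wrep v j)[i]'(by rw [wrep_length]; omega) = (wrep v j).getD i default := by
        rw [List.getD_eq_getElem]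
      rw [h0, wrep_getD v j i h]
      rfl
    · rw [List.getElem_append_right (by rw [wrep_length]; omega)]
      simp only [List.getElem_take]
      simp only [wpow, wrep_length]
      have hmod : i % v.length = i - j * v.length := by
        have h3 : i - j * v.length < v.length := by omega
        conv_lhs => rw [(by omega : i = j * v.length + (i - j * v.length))]
        rw [Nat.add_mod, Nat.mul_mod_left, Nat.zero_add, Nat.mod_mod_of_dvd _ dvd_rfl,
          Nat.mod_eq_of_lt h3]
      rw [hmod, List.getD_eq_getElem _ _ (by omega)]

end Auto1

set_option linter.unusedSectionVars false
section Auto2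
variable {A Q : Type} [Inhabited A] (δ : Q → A → Q)

theorem run_wpow (v : List A) (hv : v ≠ []) (r : Q) (j l : ℕ) (hl : l ≤ v.length) :
    runOf δ r (wpow v) (j * v.length + l) = dst δ (v.take l) (dst δ (wrep v j) r) := by
  rw [runOf_eq_dst, wtake_wpow hv j l hl, dst_append]

theorem dst_wrep_mul (x : List A) (r : Q) (K : ℕ)
    (hc : dst δ (wrep x K) (dst δ (wrep x K) r) = dst δ (wrep x K) r) :
    ∀ j, dst δ (wrep x (K * (j+1))) r = dst δ (wrep x K) r := by
  intro j; induction j with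
  | zero => rw [Nat.mul_one]
  | succ k ih =>
    have h : K * (k+1+1) = K * (k+1) + K := by ring
    rw [h, wrep_add, dst_append, ih, hc]

theorem vis_subset_infSet (x : List A) (hx : x ≠ []) (r : Q) (K : ℕ) (hK : 1 ≤ K)
    (hc : dst δ (wrep x K) (dst δ (wrep x K) r) = dst δ (wrep x K) r) :
    vis δ x (dst δ (wrep x K) r) ⊆ infSet (runOf δ r (wpow x)) := by
  intro s hs
  rw [mem_vis_iff] at hs
  obtain ⟨n, hn, rfl⟩ := hs
  intro N
  have h1 : 1 ≤ x.length := List.length_pos_iff.2 hx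
  refine ⟨K * (N+1) * x.length + n, ?_, ?_⟩
  · have h2 : 1*(N+1)*1 ≤ K * (N+1) * x.length :=
      Nat.mul_le_mul (Nat.mul_le_mul hK (le_refl (N+1))) h1
    omega
  · rw [run_wpow δ x hx r (K * (N+1)) n (le_of_lt hn), dst_wrep_mul δ x r K hc N]

theorem infSet_subset_of_collapse (x y : List A) (hy : y ≠ []) (c : Q)
    (hcol : ∀ i, 1 ≤ i → vis δ (wrep y i) c = vis δ x c) :
    infSet (runOf δ c (wpow y)) ⊆ vis δ x c := by
  intro s hs
  obtain ⟨m, _, hms⟩ := hs 0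
  have h1 : 0 < y.length := List.length_pos_iff.2 hy
  set j := m / y.length with hj
  set l := m % y.length with hl'
  have hl : l < y.length := Nat.mod_lt _ h1
  have hm2 : m = j * y.length + l := by
    rw [hj, hl', Nat.mul_comm]
    exact (Nat.div_add_mod m y.length).symm
  rw [← hms, hm2, run_wpow δ y hy c j l (le_of_lt hl)]
  rw [← hcol (j+1) (Nat.succ_le_succ (Nat.zero_le _))]
  have h3 : wrep y (j+1) = wrep y j ++ y := by
    rw [wrep_add, wrep_one]
  rw [h3, vis_append]
  exact Set.mem_union_right _ (dst_take_mem_vis δ y _ hl)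

/-- transition-and-visits profile -/
def Fpro (w : List A) : (Q → Q) × (Q → Set Q) := (dst δ w, vis δ w)

def idealP (w : List A) : Set ((Q → Q) × (Q → Set Q)) := {p | ∃ w', p = Fpro δ (w ++ w')}

theorem idealP_mono (w w₂ : List A) : idealP δ (w ++ w₂) ⊆ idealP δ w := by
  rintro p ⟨w', rfl⟩
  exact ⟨w₂ ++ w', by rw [List.append_assoc]⟩

theorem Fpro_mem_idealP (w : List A) : Fpro δ w ∈ idealP δ w :=
  ⟨[], by rw [List.append_nil]⟩

theorem idealP_wrep_subset (x z : List A) (i : ℕ) (hi : 1 ≤ i) :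
    idealP δ (wrep (x ++ z) i) ⊆ idealP δ x := by
  obtain ⟨k, rfl⟩ : ∃ k, i = k + 1 := ⟨i-1, by omega⟩
  rw [wrep_succ, List.append_assoc]
  exact idealP_mono δ x _

theorem vis_collapse {x z : List A} (i : ℕ) (hi : 1 ≤ i)
    (hmem : Fpro δ x ∈ idealP δ (wrep (x ++ z) i)) (q : Q) :
    vis δ (wrep (x ++ z) i) q = vis δ x q := by
  obtain ⟨t, ht⟩ := hmem
  apply Set.Subset.antisymm
  · have h2 : vis δ (wrep (x++z) i ++ t) q = vis δ x q := by
      have := congrArg Prod.snd ht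
      simp only [Fpro] at this
      exact (congrFun this q).symm
    rw [← h2]
    exact vis_prefix_subset δ _ t q
  · obtain ⟨k, rfl⟩ : ∃ k, i = k + 1 := ⟨i-1, by omega⟩
    rw [wrep_succ, List.append_assoc]
    exact vis_prefix_subset δ x _ q

theorem exists_idem_iter [Finite Q] (f : Q → Q) :
    ∃ K, 1 ≤ K ∧ f^[K] ∘ f^[K] = f^[K] := by
  obtain ⟨a, b, hab, heq⟩ := Finite.exists_ne_map_eq_of_infinite (fun n : ℕ => f^[n])
  wlog hlt : a < b generalizing a b
  · exact this b a hab.symm heq.symm (by omega)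
  set p := b - a with hp
  have hp1 : 1 ≤ p := by omega
  have key : ∀ j, a ≤ j → f^[j + p] = f^[j] := by
    intro j hj
    have h1 : j + p = (j - a) + b := by omega
    have h2 : j = (j - a) + a := by omega
    rw [h1, Function.iterate_add, ← heq, ← Function.iterate_add, ← h2]
  have key2 : ∀ t j, a ≤ j → f^[j + t * p] = f^[j] := by
    intro t
    induction t with
    | zero => intro j _; rw [Nat.zero_mul, Nat.add_zero]
    | succ s ih =>
      intro j hj
      have h1 : j + (s+1) * p = (j + s * p) + p := by ring
      rw [h1, key _ (by omega), ih j hj]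
  refine ⟨(a+1) * p, by nlinarith, ?_⟩
  rw [← Function.iterate_add]
  have h3 : (a+1)*p + (a+1)*p = (a+1)*p + (a+1) * p := rfl
  rw [key2 (a+1) ((a+1)*p) (by nlinarith)]

theorem dst_wrep_iterate (x : List A) (j : ℕ) (r : Q) :
    dst δ (wrep x j) r = (fun q => dst δ x q)^[j] r := by
  induction j generalizing r with
  | zero => rfl
  | succ k ih =>
    rw [wrep_succ, dst_append, ih, Function.iterate_succ_apply]

end Auto2

section Chain
variable {Q : Type} [Finite Q] (α : Set (Set Q))

/-- alternating chains of subsets under `α`-status -/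
def altch : ℕ → Set Q → Prop
  | 0, _ => True
  | n+1, S => ∃ T : Set Q, T ⊆ S ∧ ¬(T ∈ α ↔ S ∈ α) ∧ altch n T

theorem altch_le {n : ℕ} {S : Set Q} (h : altch α n S) : n ≤ S.ncard := by
  induction n generalizing S with
  | zero => exact Nat.zero_le _
  | succ k ih =>
    obtain ⟨T, hTS, hst, hT⟩ := h
    have hne : T ≠ S := by
      rintro rfl; exact hst Iff.rfl
    have hlt : T.ncard < S.ncard :=
      Set.ncard_lt_ncard (ssubset_of_subset_of_ne hTS hne) (Set.toFinite S)
    have := ih hT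
    omega

noncomputable def chainlen (S : Set Q) : ℕ := sSup {n | altch α n S}

theorem chainlen_bddAbove (S : Set Q) : BddAbove {n | altch α n S} :=
  ⟨S.ncard, fun _ hn => altch_le α hn⟩

theorem chainlen_spec (S : Set Q) : altch α (chainlen α S) S := by
  have h0 : 0 ∈ {n | altch α n S} := by
    show altch α 0 S
    trivial
  exact Nat.sSup_mem ⟨0, h0⟩ (chainlen_bddAbove α S)

theorem le_chainlen {n : ℕ} {S : Set Q} (h : altch α n S) : n ≤ chainlen α S :=
  le_csSup (chainlen_bddAbove α S) h

theorem chainlen_le_card (S : Set Q) : chainlen α S ≤ Nat.card Q := by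
  have h1 := altch_le α (chainlen_spec α S)
  have h2 : S.ncard ≤ Nat.card Q := by
    have := Set.ncard_le_ncard (Set.subset_univ S) (Set.toFinite _)
    rwa [Set.ncard_univ] at this
  omega

theorem chainlen_lt {T S : Set Q} (hsub : T ⊆ S) (hst : ¬(T ∈ α ↔ S ∈ α)) :
    chainlen α T < chainlen α S := by
  have h : altch α (chainlen α T + 1) S := ⟨T, hsub, hst, chainlen_spec α T⟩
  have := le_chainlen α h
  omega

end Chain

section Auto4
variable {A Q : Type} [Inhabited A] [Finite Q]

/-- states reachable from `q_u` by invariant words -/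
def ReachS (L : Set (ℕ → A)) (δ : Q → A → Q) (q0 : Q) (u : List A) : Set Q :=
  {r | ∃ γ, UInv L u γ ∧ r = dst δ γ (dst δ u q0)}

/-- the loop of `w^ω` started at `r` -/
def LoopI (δ : Q → A → Q) (w : List A) (r : Q) : Set Q := infSet (runOf δ r (wpow w))

noncomputable def rhoM (L : Set (ℕ → A)) (δ : Q → A → Q) (q0 : Q) (α : Set (Set Q))
    (u w : List A) : ℕ :=
  sInf {n | ∃ r ∈ ReachS L δ q0 u, n = chainlen α (LoopI δ w r)}

noncomputable def mcolA (L : Set (ℕ → A)) (δ : Q → A → Q) (q0 : Q) (α : Set (Set Q))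
    (u x : List A) : ℕ :=
  2 * ((Nat.card Q + 2) * (idealP δ x).ncard + rhoM L δ q0 α u x) +
    (if upw u x ∈ L then 0 else 1)

variable {L : Set (ℕ → A)} {δ : Q → A → Q} {q0 : Q} {α : Set (Set Q)}

theorem qu_mem_ReachS (u : List A) : dst δ u q0 ∈ ReachS L δ q0 u :=
  ⟨[], UInv_nil u, rfl⟩

theorem status_lemma (hL : ∀ w, w ∈ L ↔ infSet (runOf δ q0 w) ∈ α)
    {u x : List A} (hx : UInv L u x) {r : Q} (hr : r ∈ ReachS L δ q0 u) :
    (LoopI δ x r ∈ α) ↔ upw u x ∈ L := by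
  obtain ⟨γ, hγ, rfl⟩ := hr
  have h1 : upw u x ∈ L ↔ wcat (u ++ γ) (wpow x) ∈ L :=
    (UInv_strip hγ (wpow x)).symm
  rw [h1, hL, infSet_wcat, dst_append]
  exact Iff.rfl

theorem rhoM_le (u w : List A) {r : Q} (hr : r ∈ ReachS L δ q0 u) :
    rhoM L δ q0 α u w ≤ chainlen α (LoopI δ w r) :=
  Nat.sInf_le ⟨r, hr, rfl⟩

theorem rhoM_le_card (u w : List A) : rhoM L δ q0 α u w ≤ Nat.card Q :=
  le_trans (rhoM_le u w (qu_mem_ReachS u)) (chainlen_le_card α _)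

/-- The key descent in the stable case. -/
theorem rho_descent (hL : ∀ w, w ∈ L ↔ infSet (runOf δ q0 w) ∈ α)
    {u x z : List A} (hx : UInv L u x) (hxne : x ≠ []) (hxz : UInv L u (x ++ z))
    (hst : ∀ i, 1 ≤ i → Fpro δ x ∈ idealP δ (wrep (x ++ z) i))
    (hflip : ¬(upw u (x ++ z) ∈ L ↔ upw u x ∈ L)) :
    rhoM L δ q0 α u (x ++ z) + 1 ≤ rhoM L δ q0 α u x := by
  -- it suffices to bound every element of the defining set of rhoM x
  have key : ∀ r ∈ ReachS L δ q0 u,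
      rhoM L δ q0 α u (x ++ z) + 1 ≤ chainlen α (LoopI δ x r) := by
    intro r hr
    obtain ⟨K, hK, hidem⟩ := exists_idem_iter (fun q => dst δ x q)
    set c : Q := dst δ (wrep x K) r with hcdef
    have hc : dst δ (wrep x K) c = c := by
      rw [hcdef, dst_wrep_iterate, dst_wrep_iterate, ← Function.comp_apply (f := (fun q => dst δ x q)^[K]), hidem]
    have hcR : c ∈ ReachS L δ q0 u := by
      obtain ⟨γ, hγ, rfl⟩ := hr
      exact ⟨γ ++ wrep x K, UInv_append hγ (UInv_wrep hx K), by rw [dst_append, hcdef]⟩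
    have hxzne : x ++ z ≠ [] := by
      intro h; exact hxne (List.append_eq_nil_iff.1 h).1
    have SUB2 : LoopI δ (x ++ z) c ⊆ vis δ x c := by
      apply infSet_subset_of_collapse δ x (x ++ z) hxzne c
      intro i hi
      exact vis_collapse δ i hi (hst i hi) c
    have SUB1 : vis δ x c ⊆ LoopI δ x r :=
      vis_subset_infSet δ x hxne r K hK hc
    have hstat1 : (LoopI δ x r ∈ α) ↔ upw u x ∈ L := status_lemma hL hx hr
    have hstat2 : (LoopI δ (x ++ z) c ∈ α) ↔ upw u (x ++ z) ∈ L :=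
      status_lemma hL hxz hcR
    have hneq : ¬(LoopI δ (x ++ z) c ∈ α ↔ LoopI δ x r ∈ α) := by
      rw [hstat1, hstat2]; exact hflip
    have hlt : chainlen α (LoopI δ (x ++ z) c) < chainlen α (LoopI δ x r) :=
      chainlen_lt α (SUB2.trans SUB1) hneq
    have := rhoM_le (L := L) (q0 := q0) (α := α) u (x ++ z) hcR
    omega
  -- now use that rhoM x is attained
  have hne : {n | ∃ r ∈ ReachS L δ q0 u, n = chainlen α (LoopI δ x r)}.Nonempty :=
    ⟨_, dst δ u q0, qu_mem_ReachS u, rfl⟩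
  obtain ⟨r, hr, hrn⟩ := Nat.sInf_mem hne
  have hx2 : rhoM L δ q0 α u x = chainlen α (LoopI δ x r) := by
    rw [rhoM]; exact hrn
  rw [hx2]
  exact key r hr

theorem mcolA_even (u x : List A) :
    (Even (mcolA L δ q0 α u x) ↔ upw u x ∈ L) := by
  unfold mcolA
  split_ifs with h <;> simp [Nat.even_iff, h] <;> omega

/-- MAIN BOUND: every invariant word has a color. -/
theorem bound_main (hL : ∀ w, w ∈ L ↔ infSet (runOf δ q0 w) ∈ α) (u : List A) :
    ∀ n : ℕ, ∀ x : List A, UInv L u x → x ≠ [] → mcolA L δ q0 α u x = n →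
      ColorAtMost L u n x := by
  intro n
  induction n using Nat.strong_induction_on with
  | _ n IH =>
    intro x hx hxne hmc
    rw [ColorAtMost_iff]
    intro z hxz
    by_cases hbr : upw u (x ++ z) ∈ L ↔ Even n
    · exact Or.inl hbr
    · right
      have hflip : ¬(upw u (x ++ z) ∈ L ↔ upw u x ∈ L) := by
        have := mcolA_even (L := L) (δ := δ) (q0 := q0) (α := α) u x
        rw [hmc] at this
        tauto
      by_cases hst : ∀ i, 1 ≤ i → Fpro δ x ∈ idealP δ (wrep (x ++ z) i)
      · -- stable case : use i = 1
        have hdesc := rho_descent hL hx hxne hxz hst hflip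
        have hsub : idealP δ (x ++ z) ⊆ idealP δ x := idealP_mono δ x z
        have hcard : (idealP δ (x ++ z)).ncard ≤ (idealP δ x).ncard :=
          Set.ncard_le_ncard hsub (Set.toFinite _)
        have hlt : mcolA L δ q0 α u (x ++ z) < n := by
          rw [← hmc]
          unfold mcolA
          have hb1 : (if upw u (x ++ z) ∈ L then 0 else 1) ≤ 1 := by split_ifs <;> omega
          have hCN := Nat.mul_le_mul_left (Nat.card Q + 2) hcard
          omega
        refine ⟨1, Nat.one_pos, ⟨mcolA L δ q0 α u (x ++ z), hlt⟩, ?_⟩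
        show ColorAtMost L u (mcolA L δ q0 α u (x ++ z)) (wrep (x ++ z) 1)
        rw [wrep_one]
        exact IH _ hlt (x ++ z) hxz (by intro h; exact hxne (List.append_eq_nil_iff.1 h).1) rfl
      · -- unstable case : the ideal drops at some i
        push_neg at hst
        obtain ⟨i, hi, hnotin⟩ := hst
        have hyinv : UInv L u (wrep (x ++ z) i) := UInv_wrep hxz i
        have hyne : wrep (x ++ z) i ≠ [] :=
          wrep_ne_nil _ (by intro h; exact hxne (List.append_eq_nil_iff.1 h).1) i hi
        have hssub : idealP δ (wrep (x ++ z) i) ⊂ idealP δ x := by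
          refine ⟨idealP_wrep_subset δ x z i hi, ?_⟩
          intro hsup
          exact hnotin (hsup (Fpro_mem_idealP δ x))
        have hcard : (idealP δ (wrep (x ++ z) i)).ncard < (idealP δ x).ncard :=
          Set.ncard_lt_ncard hssub (Set.toFinite _)
        have hrho : rhoM L δ q0 α u (wrep (x ++ z) i) ≤ Nat.card Q := rhoM_le_card _ _
        have hrho0 : 0 ≤ rhoM L δ q0 α u x := Nat.zero_le _
        have hlt : mcolA L δ q0 α u (wrep (x ++ z) i) < n := by
          rw [← hmc]
          unfold mcolA
          have hb1 : (if upw u (wrep (x ++ z) i) ∈ L then 0 else 1) ≤ 1 := by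
            split_ifs <;> omega
          have hCN := Nat.mul_le_mul_left (Nat.card Q + 2)
            (show (idealP δ (wrep (x ++ z) i)).ncard + 1 ≤ (idealP δ x).ncard by omega)
          rw [Nat.mul_add, Nat.mul_one] at hCN
          omega
        refine ⟨i, by omega, ⟨mcolA L δ q0 α u (wrep (x ++ z) i), hlt⟩, ?_⟩
        show ColorAtMost L u (mcolA L δ q0 α u (wrep (x ++ z) i)) (wrep (x ++ z) i)
        exact IH _ hlt _ hyinv hyne rfl

end Auto4

section Final
variable {A Q : Type} [Inhabited A] [Finite Q]
variable {L : Set (ℕ → A)} {δ : Q → A → Q} {q0 : Q} {α : Set (Set Q)}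

theorem simL_of_dst (hL : ∀ w, w ∈ L ↔ infSet (runOf δ q0 w) ∈ α)
    {x y : List A} (h : dst δ x q0 = dst δ y q0) : simL L x y := by
  intro w'
  rw [hL, hL, infSet_wcat, infSet_wcat, h]

theorem exists_inv_decomp (hL : ∀ w, w ∈ L ↔ infSet (runOf δ q0 w) ∈ α)
    (w : ℕ → A) (hup : ∃ u v : List A, v ≠ [] ∧ w = upw u v) :
    ∃ u v : List A, v ≠ [] ∧ w = upw u v ∧ UInv L u v := by
  obtain ⟨u₀, v₀, hv₀, hw₀⟩ := hup
  obtain ⟨a, b, hab, heq⟩ :=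
    Finite.exists_ne_map_eq_of_infinite (fun i : ℕ => dst δ (u₀ ++ wrep v₀ i) q0)
  wlog hlt : a < b generalizing a b
  · exact this b a hab.symm heq.symm (by omega)
  refine ⟨u₀ ++ wrep v₀ a, wrep v₀ (b - a), wrep_ne_nil v₀ hv₀ _ (by omega), ?_, ?_⟩
  · rw [hw₀]
    unfold upw
    rw [wcat_append, wpow_wrep v₀ hv₀ (b-a) (by omega), wcat_wrep_wpow v₀ hv₀]
  · unfold UInv
    apply simL_of_dst hL
    rw [List.append_assoc, ← wrep_add, Nat.add_sub_cancel' (le_of_lt hlt)]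
    exact heq

end Final

theorem mem_iff_even_color' {A : Type} [Inhabited A] (L : Set (ℕ → A))
    (hreg : OmegaRegular L) (w : ℕ → A)
    (hup : ∃ u v : List A, v ≠ [] ∧ w = upw u v) :
    w ∈ L ↔ Even (icol L w) := by
  obtain ⟨Q, hQ, q0, δ, α, hL⟩ := hreg
  have : Finite Q := Finite.of_fintype Q
  have bound : ∀ u x : List A, UInv L u x → x ≠ [] → ∃ c, ColorAtMost L u c x :=
    fun u x hx hxne => ⟨mcolA L δ q0 α u x, bound_main hL u _ x hx hxne rfl⟩
  exact main_of_bound bound w (exists_inv_decomp hL w hup)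


/-- an ultimately periodic word belongs to `L` iff its natural color
is even. -/
theorem mem_iff_even_color {A : Type} [Inhabited A] (L : Set (ℕ → A))
    (hreg : OmegaRegular L) (w : ℕ → A)
    (hup : ∃ u v : List A, v ≠ [] ∧ w = upw u v) :
    w ∈ L ↔ Even (icol L w) := by
  exact mem_iff_even_color' L hreg w hup
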